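/- arXiv:1910.01222 — 3 statements merged into one kernel-verified Lean document; each statement's English description precedes it below -/
import Mathlib

section
/- Let A be a strongly indecomposable torsion-free abelian group of finite rank with quasi-endomorphism ring ℚEnd(A) = ℚ ⊗_ℤ End(A), and suppose A ≠ PSoc(A). If the quotient ring ℚEnd(A)/J(ℚEnd(A)) is commutative, the socle of ℚEnd(A) as a right module over itself coincides with its socle as a module over its center C(ℚEnd(A)), and C(ℚEnd(A)) ∩ M ≠ 0 for every minimal right ideal M of ℚEnd(A), then ℚEnd(A) is a centrally essential ring. -/
open TensorProduct

/-- A ring `R` is centrally essential if for every nonzero `a : R` there exist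
nonzero central elements `x, y` with `a * x = y`. -/
def IsCentrallyEssential (R : Type*) [Ring R] : Prop :=
  ∀ a : R, a ≠ 0 → ∃ x y : R, x ∈ Set.center R ∧ y ∈ Set.center R ∧
    x ≠ 0 ∧ y ≠ 0 ∧ a * x = y

/-- A subgroup `B` of an abelian group `A` is pure if every equation `n • x = b` (`b ∈ B`,
`n > 0`) solvable in `A` is solvable in `B`. -/
def IsPureSubgroup {A : Type*} [AddCommGroup A] (B : AddSubgroup A) : Prop :=
  ∀ n : ℕ, 0 < n → ∀ b ∈ B, (∃ x : A, n • x = b) → ∃ y ∈ B, n • y = b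

/-- A subgroup `B` of an abelian group `A` is fully invariant if it is stable under every
endomorphism of `A`. -/
def IsFullyInvariant {A : Type*} [AddCommGroup A] (B : AddSubgroup A) : Prop :=
  ∀ f : AddMonoid.End A, ∀ b ∈ B, f b ∈ B

/-- A minimal nonzero pure fully invariant subgroup. -/
def IsMinimalPureFullyInvariant {A : Type*} [AddCommGroup A] (B : AddSubgroup A) : Prop :=
  B ≠ ⊥ ∧ IsPureSubgroup B ∧ IsFullyInvariant B ∧
    ∀ C : AddSubgroup A, C ≠ ⊥ → IsPureSubgroup C → IsFullyInvariant C → C ≤ B → C = B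

/-- The pseudo-socle of `A`: the smallest pure subgroup containing all minimal nonzero
pure fully invariant subgroups of `A`. -/
def PSoc (A : Type*) [AddCommGroup A] : AddSubgroup A :=
  sInf {P : AddSubgroup A | IsPureSubgroup P ∧
    sSup {B : AddSubgroup A | IsMinimalPureFullyInvariant B} ≤ P}

/-- A torsion-free abelian group `A` is strongly indecomposable if there are no nonzero
subgroups `B, C` with `B ∩ C = 0` and `n • A ⊆ B + C` for some positive integer `n`. -/
def StronglyIndecomposable (A : Type*) [AddCommGroup A] : Prop :=
  ¬∃ B C : AddSubgroup A, B ≠ ⊥ ∧ C ≠ ⊥ ∧ B ⊓ C = ⊥ ∧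
    ∃ n : ℕ, 0 < n ∧ ∀ a : A, n • a ∈ B ⊔ C

/-- A right ideal of `R`: an additive subgroup stable under right multiplication. -/
def IsRightIdeal {R : Type*} [Ring R] (M : AddSubgroup R) : Prop :=
  ∀ a ∈ M, ∀ r : R, a * r ∈ M

/-- A minimal right ideal: a nonzero right ideal properly containing no nonzero
right ideal. -/
def IsMinimalRightIdeal {R : Type*} [Ring R] (M : AddSubgroup R) : Prop :=
  M ≠ ⊥ ∧ IsRightIdeal M ∧
    ∀ N : AddSubgroup R, IsRightIdeal N → N ≤ M → N = ⊥ ∨ N = M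

/-- A `C(R)`-submodule of `R`: an additive subgroup stable under multiplication by
central elements. -/
def IsCenterSubmodule {R : Type*} [Ring R] (M : AddSubgroup R) : Prop :=
  ∀ a ∈ M, ∀ c ∈ Set.center R, c * a ∈ M

/-- A minimal (simple) `C(R)`-submodule of `R`. -/
def IsMinimalCenterSubmodule {R : Type*} [Ring R] (M : AddSubgroup R) : Prop :=
  M ≠ ⊥ ∧ IsCenterSubmodule M ∧
    ∀ N : AddSubgroup R, IsCenterSubmodule N → N ≤ M → N = ⊥ ∨ N = M

/-- The socle of `R` as a right `R`-module: the sum of all minimal right ideals. -/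
def rightSocle (R : Type*) [Ring R] : AddSubgroup R :=
  sSup {M : AddSubgroup R | IsMinimalRightIdeal M}

/-- The socle of `R` as a module over its center: the sum of all simple
`C(R)`-submodules of `R`. -/
def centerSocle (R : Type*) [Ring R] : AddSubgroup R :=
  sSup {M : AddSubgroup R | IsMinimalCenterSubmodule M}


section Aux

/-- If `j` is in the Jacobson radical, then `1 - j * s` has a left inverse. -/
private lemma CE_left_inv {R : Type*} [Ring R] {j : R}
    (hj : j ∈ Ideal.jacobson (⊥ : Ideal R)) (s : R) : ∃ v : R, v * (1 - j * s) = 1 := by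
  have hu : ∃ u : R, u * (1 - s * j) = 1 := by
    by_cases h : Ideal.span {1 - s * j} = (⊤ : Ideal R)
    · have h1 : (1 : R) ∈ Ideal.span ({1 - s * j} : Set R) := by rw [h]; trivial
      exact Ideal.mem_span_singleton'.mp h1
    · obtain ⟨m, hmmax, hle⟩ := Ideal.exists_le_maximal _ h
      have hjm : j ∈ m := Submodule.mem_sInf.mp hj m ⟨bot_le, hmmax⟩
      have h2 : (1 - s * j) ∈ m := hle (Ideal.subset_span rfl)
      have h3 : s * j ∈ m := m.mul_mem_left s hjm
      have h1m : (1 : R) ∈ m := by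
        have := m.add_mem h2 h3
        simpa using this
      exact absurd ((Ideal.eq_top_iff_one m).mpr h1m) hmmax.ne_top
  obtain ⟨u, hu⟩ := hu
  have hu' : u - u * s * j = 1 := by
    rw [mul_sub, mul_one, ← mul_assoc] at hu; exact hu
  refine ⟨1 + j * u * s, ?_⟩
  have key : (1 + j * u * s) * (1 - j * s) = 1 - j * s + j * (u - u * s * j) * s := by
    noncomm_ring
  rw [key, hu']
  noncomm_ring

/-- Every element of a minimal right ideal containing a nonzero central element is central,
provided all commutators lie in the Jacobson radical. -/
private lemma CE_min_central {R : Type*} [Ring R]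
    (hcomm : ∀ a b : R, a * b - b * a ∈ Ideal.jacobson (⊥ : Ideal R))
    {M : AddSubgroup R} (hM : IsMinimalRightIdeal M)
    {x : R} (hx0 : x ≠ 0) (hxc : x ∈ Set.center R) (hxM : x ∈ M) :
    ∀ m ∈ M, m ∈ Set.center R := by
  have hxcomm : ∀ g : R, g * x = x * g := fun g => (Semigroup.mem_center_iff.mp hxc) g
  -- `x` annihilates the Jacobson radical
  have hxJ : ∀ j ∈ Ideal.jacobson (⊥ : Ideal R), x * j = 0 := by
    intro j hj
    by_contra hne
    have hNM : ∀ r : R, (x * j) * r ∈ M := by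
      intro r
      have : x * (j * r) ∈ M := hM.2.1 x hxM (j * r)
      rwa [← mul_assoc] at this
    set N : AddSubgroup R := (AddMonoidHom.mulLeft (x * j)).range with hNdef
    have hmemN : ∀ y : R, y ∈ N ↔ ∃ r : R, (x * j) * r = y := by
      intro y
      constructor
      · rintro ⟨r, rfl⟩; exact ⟨r, rfl⟩
      · rintro ⟨r, rfl⟩; exact ⟨r, rfl⟩
    have hNle : N ≤ M := by
      intro y hy
      obtain ⟨r, rfl⟩ := (hmemN y).mp hy
      exact hNM r
    have hNright : IsRightIdeal N := by
      intro a ha r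
      obtain ⟨s, rfl⟩ := (hmemN a).mp ha
      exact (hmemN _).mpr ⟨s * r, by rw [← mul_assoc]⟩
    have hNbot : N ≠ ⊥ := by
      intro hbot
      have : x * j ∈ N := (hmemN _).mpr ⟨1, mul_one _⟩
      rw [hbot, AddSubgroup.mem_bot] at this
      exact hne this
    have hNM' : N = M := (hM.2.2 N hNright hNle).resolve_left hNbot
    have hxN : x ∈ N := hNM' ▸ hxM
    obtain ⟨s, hs⟩ := (hmemN x).mp hxN
    have hjs : j * s * x = x := by
      rw [mul_assoc, hxcomm s, ← mul_assoc, hxcomm j, hs]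
    have h0 : (1 - j * s) * x = 0 := by
      rw [sub_mul, one_mul, hjs, sub_self]
    obtain ⟨v, hv⟩ := CE_left_inv hj s
    have : x = 0 := by
      calc x = 1 * x := (one_mul x).symm
      _ = v * (1 - j * s) * x := by rw [hv]
      _ = v * ((1 - j * s) * x) := by rw [mul_assoc]
      _ = 0 := by rw [h0, mul_zero]
    exact hx0 this
  -- `M = x R`
  have hsurj : ∀ m ∈ M, ∃ r : R, x * r = m := by
    set N : AddSubgroup R := (AddMonoidHom.mulLeft x).range with hNdef
    have hmemN : ∀ y : R, y ∈ N ↔ ∃ r : R, x * r = y := by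
      intro y
      constructor
      · rintro ⟨r, rfl⟩; exact ⟨r, rfl⟩
      · rintro ⟨r, rfl⟩; exact ⟨r, rfl⟩
    have hNle : N ≤ M := by
      intro y hy
      obtain ⟨r, rfl⟩ := (hmemN y).mp hy
      exact hM.2.1 x hxM r
    have hNright : IsRightIdeal N := by
      intro a ha r
      obtain ⟨s, rfl⟩ := (hmemN a).mp ha
      exact (hmemN _).mpr ⟨s * r, by rw [← mul_assoc]⟩
    have hNbot : N ≠ ⊥ := by
      intro hbot
      have : x ∈ N := (hmemN _).mpr ⟨1, mul_one _⟩
      rw [hbot, AddSubgroup.mem_bot] at this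
      exact hx0 this
    have hNM' : N = M := (hM.2.2 N hNright hNle).resolve_left hNbot
    intro m hm
    exact (hmemN m).mp (hNM' ▸ hm)
  intro m hm
  obtain ⟨r, rfl⟩ := hsurj m hm
  rw [Semigroup.mem_center_iff]
  intro t
  have h1 : x * (r * t - t * r) = 0 := hxJ _ (hcomm r t)
  have h2 : x * (r * t) = x * (t * r) := by
    rw [mul_sub] at h1
    exact sub_eq_zero.mp h1
  calc t * (x * r) = x * (t * r) := by rw [← mul_assoc, hxcomm t, mul_assoc]
  _ = x * (r * t) := h2.symm
  _ = x * r * t := (mul_assoc _ _ _).symm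

/-- The right socle is contained in the center. -/
private lemma CE_socle_central {R : Type*} [Ring R]
    (hcomm : ∀ a b : R, a * b - b * a ∈ Ideal.jacobson (⊥ : Ideal R))
    (hmeet : ∀ M : AddSubgroup R, IsMinimalRightIdeal M →
      ∃ x : R, x ≠ 0 ∧ x ∈ Set.center R ∧ x ∈ M) :
    ∀ r ∈ rightSocle R, r ∈ Set.center R := by
  have hle : rightSocle R ≤ (Subring.center R).toAddSubgroup := by
    apply sSup_le
    intro M hM
    obtain ⟨x, hx0, hxc, hxM⟩ := hmeet M hM
    intro m hm
    have : m ∈ Set.center R := CE_min_central hcomm hM hx0 hxc hxM m hm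
    exact this
  intro r hr
  exact hle hr

/-- In a finite-dimensional `ℚ`-algebra, any nonzero `C(R)`-submodule contains a
minimal one. -/
private lemma CE_exists_min {R : Type*} [Ring R] [Algebra ℚ R] [FiniteDimensional ℚ R]
    (T : AddSubgroup R) (hT : IsCenterSubmodule T) (hT0 : T ≠ ⊥) :
    ∃ S : AddSubgroup R, IsMinimalCenterSubmodule S ∧ S ≤ T := by
  have hsmul : ∀ N : AddSubgroup R, IsCenterSubmodule N → ∀ (q : ℚ) (n : R),
      n ∈ N → q • n ∈ N := by
    intro N hN q n hn
    have hc : (algebraMap ℚ R q) ∈ Set.center R :=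
      Semigroup.mem_center_iff.mpr fun g => (Algebra.commutes q g).symm
    have := hN n hn _ hc
    rwa [← Algebra.smul_def] at this
  let toSub : (N : AddSubgroup R) → IsCenterSubmodule N → Submodule ℚ R := fun N hN =>
    { carrier := N
      add_mem' := fun h1 h2 => N.add_mem h1 h2
      zero_mem' := N.zero_mem
      smul_mem' := fun q n hn => hsmul N hN q n hn }
  set Scal : Set (Submodule ℚ R) :=
    {V | V ≠ ⊥ ∧ (∀ v ∈ V, v ∈ T) ∧ IsCenterSubmodule V.toAddSubgroup} with hScal
  have hTc' : IsCenterSubmodule (toSub T hT).toAddSubgroup := by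
    intro a ha c hc
    exact hT a ha c hc
  have hne : Scal.Nonempty := by
    refine ⟨toSub T hT, ?_, fun v hv => hv, hTc'⟩
    intro h
    apply hT0
    rw [AddSubgroup.eq_bot_iff_forall]
    intro y hy
    have hy' : y ∈ toSub T hT := hy
    rw [h] at hy'
    simpa using hy'
  obtain ⟨V, hVS, hVmin⟩ := IsArtinian.set_has_minimal Scal hne
  obtain ⟨hV0, hVT, hVc⟩ := hVS
  refine ⟨V.toAddSubgroup, ⟨?_, hVc, ?_⟩, fun v hv => hVT v hv⟩
  · intro h
    apply hV0
    ext y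
    constructor
    · intro hy
      have : y ∈ V.toAddSubgroup := hy
      rw [h] at this
      simpa using this
    · intro hy
      simp only [Submodule.mem_bot] at hy
      rw [hy]; exact V.zero_mem
  · intro N hN hNle
    by_cases hbot : N = ⊥
    · left; exact hbot
    · right
      have hNbot' : toSub N hN ≠ ⊥ := by
        intro h
        apply hbot
        rw [AddSubgroup.eq_bot_iff_forall]
        intro y hy
        have hy' : y ∈ toSub N hN := hy
        rw [h] at hy'
        simpa using hy'
      have hNc' : IsCenterSubmodule (toSub N hN).toAddSubgroup := fun a ha c hc => hN a ha c hc
      have hmemN' : toSub N hN ∈ Scal :=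
        ⟨hNbot', fun v hv => hVT v (hNle hv), hNc'⟩
      have hle : toSub N hN ≤ V := fun v hv => hNle hv
      have heq : toSub N hN = V := by
        by_contra hne2
        exact hVmin _ hmemN' (lt_of_le_of_ne hle hne2)
      ext y
      constructor
      · intro hy
        have hy' : y ∈ toSub N hN := hy
        rw [heq] at hy'
        exact hy'
      · intro hy
        have hy' : y ∈ V := hy
        rw [← heq] at hy'
        exact hy'

/-- For a torsion-free abelian group, `1 ⊗ b = 0` in `ℚ ⊗ A` implies `b = 0`. -/
private lemma CE_one_tmul_eq_zero {A : Type*} [AddCommGroup A]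
    (htf : ∀ (n : ℕ) (a : A), 0 < n → n • a = 0 → a = 0)
    {b : A} (hb : (1 : ℚ) ⊗ₜ[ℤ] b = (0 : ℚ ⊗[ℤ] A)) : b = 0 := by
  let g : A →ₗ[ℤ] ℚ ⊗[ℤ] A := TensorProduct.mk ℤ ℚ A 1
  have hbc : IsBaseChange ℚ g := TensorProduct.isBaseChange ℤ A ℚ
  have hloc : IsLocalizedModule (nonZeroDivisors ℤ) g :=
    (isLocalizedModule_iff_isBaseChange (nonZeroDivisors ℤ) ℚ g).mpr hbc
  have hg : g b = 0 := hb
  obtain ⟨s, hs⟩ := (IsLocalizedModule.eq_zero_iff (nonZeroDivisors ℤ) g).mp hg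
  have hsne : (s : ℤ) ≠ 0 := nonZeroDivisors.coe_ne_zero s
  have hs' : (s : ℤ) • b = 0 := hs
  have hpos : 0 < (s : ℤ).natAbs := Int.natAbs_pos.mpr hsne
  apply htf (s : ℤ).natAbs b hpos
  rcases Int.natAbs_eq (s : ℤ) with h | h
  · rw [← natCast_zsmul, ← h, hs']
  · rw [← natCast_zsmul, ← neg_neg (((s : ℤ).natAbs : ℤ)), ← h, neg_zsmul, hs', neg_zero]

/-- Every element of `ℚ ⊗ M` has an integer multiple of the form `1 ⊗ f`. -/
private lemma CE_exists_int_smul {M : Type*} [AddCommGroup M] (t : ℚ ⊗[ℤ] M) :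
    ∃ (n : ℤ) (f : M), n ≠ 0 ∧ n • t = (1 : ℚ) ⊗ₜ[ℤ] f := by
  induction t with
  | zero => exact ⟨1, 0, one_ne_zero, by simp⟩
  | tmul q f =>
    refine ⟨(q.den : ℤ), q.num • f, by exact_mod_cast q.den_nz, ?_⟩
    have hden : ((q.den : ℚ)) ≠ 0 := by exact_mod_cast q.den_nz
    have h1 : ((q.den : ℤ) : ℚ) * q = (q.num : ℚ) := by
      have h0 := Rat.num_div_den q
      rw [div_eq_iff hden] at h0
      push_cast
      rw [mul_comm]
      exact h0.symm
    calc ((q.den : ℤ)) • (q ⊗ₜ[ℤ] f) = (((q.den : ℤ)) • q) ⊗ₜ[ℤ] f := by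
          rw [TensorProduct.smul_tmul']
    _ = ((((q.den : ℤ) : ℚ)) * q) ⊗ₜ[ℤ] f := by rw [zsmul_eq_mul]
    _ = ((q.num : ℚ)) ⊗ₜ[ℤ] f := by rw [h1]
    _ = ((q.num • (1 : ℚ))) ⊗ₜ[ℤ] f := by rw [zsmul_eq_mul, mul_one]
    _ = (1 : ℚ) ⊗ₜ[ℤ] (q.num • f) := TensorProduct.smul_tmul _ _ _
  | add t₁ t₂ ih₁ ih₂ =>
    obtain ⟨n₁, f₁, h₁, e₁⟩ := ih₁
    obtain ⟨n₂, f₂, h₂, e₂⟩ := ih₂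
    refine ⟨n₁ * n₂, n₂ • f₁ + n₁ • f₂, mul_ne_zero h₁ h₂, ?_⟩
    have a1 : (n₁ * n₂) • t₁ = (1 : ℚ) ⊗ₜ[ℤ] (n₂ • f₁) := by
      rw [mul_comm, mul_smul, e₁, TensorProduct.tmul_smul]
    have a2 : (n₁ * n₂) • t₂ = (1 : ℚ) ⊗ₜ[ℤ] (n₁ • f₂) := by
      rw [mul_smul, e₂, TensorProduct.tmul_smul]
    rw [smul_add, a1, a2, TensorProduct.tmul_add]

/-- The quasi-endomorphism ring of a torsion-free group of finite rank is a
finite-dimensional `ℚ`-algebra. -/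
private lemma CE_findim {A : Type*} [AddCommGroup A]
    (htf : ∀ (n : ℕ) (a : A), 0 < n → n • a = 0 → a = 0)
    (hfr : FiniteDimensional ℚ (ℚ ⊗[ℤ] A)) :
    FiniteDimensional ℚ (ℚ ⊗[ℤ] AddMonoid.End A) := by
  haveI := hfr
  let g0 : AddMonoid.End A →+ ((ℚ ⊗[ℤ] A) →ₗ[ℚ] (ℚ ⊗[ℤ] A)) :=
    { toFun := fun f => LinearMap.baseChange ℚ (AddMonoidHom.toIntLinearMap (f : A →+ A))
      map_zero' := by
        refine LinearMap.ext fun t => ?_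
        induction t with
        | zero => simp
        | tmul x y =>
          have : (AddMonoidHom.toIntLinearMap ((0 : AddMonoid.End A) : A →+ A)) y = 0 := rfl
          simp [LinearMap.baseChange_tmul, this]
        | add u v hu hv => simp_all
      map_add' := by
        intro f₁ f₂
        refine LinearMap.ext fun t => ?_
        induction t with
        | zero => simp
        | tmul x y =>
          have : ((f₁ + f₂ : AddMonoid.End A)) y = f₁ y + f₂ y := rfl
          simp [LinearMap.baseChange_tmul, this, TensorProduct.tmul_add]
          rw [← TensorProduct.tmul_add]; rfl
        | add u v hu hv =>
          simp only [map_add, hu, hv]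
          try abel }
  let g : AddMonoid.End A →ₗ[ℤ] ((ℚ ⊗[ℤ] A) →ₗ[ℚ] (ℚ ⊗[ℤ] A)) := g0.toIntLinearMap
  let ψ : (ℚ ⊗[ℤ] AddMonoid.End A) →ₗ[ℚ] ((ℚ ⊗[ℤ] A) →ₗ[ℚ] (ℚ ⊗[ℤ] A)) :=
    LinearMap.liftBaseChange ℚ g
  apply FiniteDimensional.of_injective ψ
  rw [injective_iff_map_eq_zero]
  intro t ht
  obtain ⟨n, f, hn, he⟩ := CE_exists_int_smul t
  have h2 : ψ (n • t) = 0 := by rw [map_zsmul, ht, smul_zero]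
  rw [he] at h2
  have h3 : g f = 0 := by
    have := h2
    rw [LinearMap.liftBaseChange_tmul, one_smul] at this
    exact this
  have h4 : ∀ a : A, (f : A →+ A) a = 0 := by
    intro a
    have h5 : (LinearMap.baseChange ℚ (AddMonoidHom.toIntLinearMap (f : A →+ A)))
        ((1 : ℚ) ⊗ₜ[ℤ] a) = 0 := by
      rw [show LinearMap.baseChange ℚ (AddMonoidHom.toIntLinearMap (f : A →+ A)) = g f from rfl,
        h3]
      rfl
    rw [LinearMap.baseChange_tmul] at h5
    exact CE_one_tmul_eq_zero htf h5
  have hf : f = 0 := DFunLike.ext f 0 h4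
  rw [hf] at he
  simp only [TensorProduct.tmul_zero] at he
  have hq : ((n : ℚ)) • t = 0 := by rw [Int.cast_smul_eq_zsmul, he]
  rcases smul_eq_zero.mp hq with h | h
  · exact absurd (by exact_mod_cast h) hn
  · exact h

end Aux

/-- for a strongly indecomposable torsion-free abelian group `A` of finite
rank with `A ≠ PSoc A`, if `ℚEnd A / J(ℚEnd A)` is commutative,
`Soc(ℚEnd A) = Soc(ℚEnd A)` over its center, and `C(ℚEnd A) ∩ M ≠ 0` for every minimal
right ideal `M` of `ℚEnd A`, then `ℚEnd A` is centrally essential. -/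
theorem isCentrallyEssential_quasiEnd_of_comm_mod_jacobson
    (A : Type*) [AddCommGroup A]
    (htf : ∀ (n : ℕ) (a : A), 0 < n → n • a = 0 → a = 0)
    (hsi : StronglyIndecomposable A)
    (hfr : FiniteDimensional ℚ (ℚ ⊗[ℤ] A))
    (hpsoc : PSoc A ≠ ⊤)
    (hcomm : ∀ a b : ℚ ⊗[ℤ] AddMonoid.End A,
      a * b - b * a ∈ Ideal.jacobson (⊥ : Ideal (ℚ ⊗[ℤ] AddMonoid.End A)))
    (hsoc : rightSocle (ℚ ⊗[ℤ] AddMonoid.End A) = centerSocle (ℚ ⊗[ℤ] AddMonoid.End A))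
    (hmeet : ∀ M : AddSubgroup (ℚ ⊗[ℤ] AddMonoid.End A), IsMinimalRightIdeal M →
      ∃ x : ℚ ⊗[ℤ] AddMonoid.End A,
        x ≠ 0 ∧ x ∈ Set.center (ℚ ⊗[ℤ] AddMonoid.End A) ∧ x ∈ M) :
    IsCentrallyEssential (ℚ ⊗[ℤ] AddMonoid.End A) := by
  haveI : FiniteDimensional ℚ (ℚ ⊗[ℤ] AddMonoid.End A) := CE_findim htf hfr
  intro a ha
  -- the `C(R)`-submodule `a · C(R)`
  set T : AddSubgroup (ℚ ⊗[ℤ] AddMonoid.End A) :=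
    (Subring.center (ℚ ⊗[ℤ] AddMonoid.End A)).toAddSubgroup.map (AddMonoidHom.mulLeft a)
    with hTdef
  have hTmem : ∀ y, y ∈ T ↔ ∃ c ∈ Set.center (ℚ ⊗[ℤ] AddMonoid.End A), a * c = y := by
    intro y
    rw [hTdef, AddSubgroup.mem_map]
    constructor
    · rintro ⟨c, hc, rfl⟩
      exact ⟨c, hc, rfl⟩
    · rintro ⟨c, hc, rfl⟩
      exact ⟨c, hc, rfl⟩
  have hTc : IsCenterSubmodule T := by
    intro y hy c hc
    obtain ⟨d, hd, rfl⟩ := (hTmem y).mp hy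
    refine (hTmem _).mpr ⟨d * c, Set.mul_mem_center hd hc, ?_⟩
    have hccomm : ∀ g, g * c = c * g := fun g => (Semigroup.mem_center_iff.mp hc) g
    rw [← mul_assoc, ← hccomm (a * d)]
  have hT0 : T ≠ ⊥ := by
    intro hbot
    have haT : a ∈ T := (hTmem a).mpr ⟨1, Set.one_mem_center, mul_one a⟩
    rw [hbot, AddSubgroup.mem_bot] at haT
    exact ha haT
  obtain ⟨S, hSmin, hST⟩ := CE_exists_min T hTc hT0
  have hSsoc : S ≤ centerSocle (ℚ ⊗[ℤ] AddMonoid.End A) := le_sSup hSmin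
  obtain ⟨b, hbS, hb0⟩ : ∃ b ∈ S, b ≠ 0 := by
    by_contra h
    push_neg at h
    exact hSmin.1 ((AddSubgroup.eq_bot_iff_forall S).mpr h)
  obtain ⟨c, hc, hac⟩ := (hTmem b).mp (hST hbS)
  have hbsoc : b ∈ rightSocle (ℚ ⊗[ℤ] AddMonoid.End A) := by
    rw [hsoc]
    exact hSsoc hbS
  have hbc : b ∈ Set.center (ℚ ⊗[ℤ] AddMonoid.End A) := by
    refine CE_socle_central hcomm ?_ b hbsoc
    intro M hM
    obtain ⟨x, hx0, hxc, hxM⟩ := hmeet M hM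
    exact ⟨x, hx0, hxc, hxM⟩
  have hcne : c ≠ 0 := by
    intro h
    apply hb0
    rw [← hac, h, mul_zero]
  exact ⟨c, b, hc, hbc, hcne, hb0, hac⟩
end

section
/- Let T be the set of all 3×3 matrices over ℚ of the form [[x, y, z], [0, x, t], [0, 0, x]] with x, y, z, t ∈ ℚ. Then T is a unital subring of the ring Mat₃(ℚ) of 3×3 rational matrices, T is non-commutative, and T is not a centrally essential ring. -/
noncomputable def Tsub : Subring (Matrix (Fin 3) (Fin 3) ℚ) where
  carrier := {m | ∃ x y z t : ℚ, m = !![x, y, z; 0, x, t; 0, 0, x]}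
  zero_mem' := ⟨0, 0, 0, 0, by ext i j; fin_cases i <;> fin_cases j <;> rfl⟩
  one_mem' := ⟨1, 0, 0, 0, by ext i j; fin_cases i <;> fin_cases j <;> rfl⟩
  add_mem' := by
    rintro a b ⟨x, y, z, t, rfl⟩ ⟨x', y', z', t', rfl⟩
    exact ⟨x + x', y + y', z + z', t + t', by ext i j; fin_cases i <;> fin_cases j <;>
      simp [Matrix.vecHead, Matrix.vecTail]⟩
  neg_mem' := by
    rintro a ⟨x, y, z, t, rfl⟩
    exact ⟨-x, -y, -z, -t, by ext i j; fin_cases i <;> fin_cases j <;>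
      simp [Matrix.vecHead, Matrix.vecTail]⟩
  mul_mem' := by
    rintro a b ⟨x, y, z, t, rfl⟩ ⟨x', y', z', t', rfl⟩
    refine ⟨x * x', x * y' + y * x', x * z' + y * t' + z * x', x * t' + t * x', ?_⟩
    ext i j; fin_cases i <;> fin_cases j <;>
      simp [Matrix.mul_apply, Fin.sum_univ_three, Matrix.vecHead, Matrix.vecTail]

/-- the set of matrices `[[x, y, z], [0, x, t], [0, 0, x]]` over `ℚ` is a
unital subring of `Mat₃(ℚ)` which is non-commutative and not centrally essential. -/
theorem exists_subring_T_noncomm_not_centrallyEssential :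
    ∃ T : Subring (Matrix (Fin 3) (Fin 3) ℚ),
      (T : Set (Matrix (Fin 3) (Fin 3) ℚ)) =
        {m | ∃ x y z t : ℚ, m = !![x, y, z; 0, x, t; 0, 0, x]} ∧
      (¬∀ a b : T, a * b = b * a) ∧
      ¬IsCentrallyEssential T := by

  refine ⟨Tsub, rfl, ?_, ?_⟩
  · intro h
    set A : Tsub := ⟨!![0,1,0;0,0,0;0,0,0], ⟨0,1,0,0, by norm_num⟩⟩ with hA
    set B : Tsub := ⟨!![0,0,0;0,0,1;0,0,0], ⟨0,0,0,1, by norm_num⟩⟩ with hB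
    have := congrArg (fun m : Tsub => (m : Matrix (Fin 3) (Fin 3) ℚ) 0 2) (h A B)
    simp [hA, hB, Matrix.mul_apply, Fin.sum_univ_three] at this
  · intro h
    set A : Tsub := ⟨!![0,1,0;0,0,0;0,0,0], ⟨0,1,0,0, by norm_num⟩⟩ with hA
    set B : Tsub := ⟨!![0,0,0;0,0,1;0,0,0], ⟨0,0,0,1, by norm_num⟩⟩ with hB
    have hAne : A ≠ 0 := by
      intro h0
      have := congrArg (fun m : Tsub => (m : Matrix (Fin 3) (Fin 3) ℚ) 0 1) h0
      simp [hA] at this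
    obtain ⟨x, y, hxc, hyc, hx0, hy0, hxy⟩ := h A hAne
    obtain ⟨p, q, r, s, hm⟩ := x.2
    have hcomA := congrArg (Subtype.val) ((Semigroup.mem_center_iff.mp hxc) A)
    push_cast at hcomA
    rw [hm] at hcomA
    have hs : s = 0 := by
      have := congrArg (fun m : Matrix (Fin 3) (Fin 3) ℚ => m 0 2) hcomA
      simpa [hA, Matrix.mul_apply, Fin.sum_univ_three] using this
    have hyval : (y : Matrix (Fin 3) (Fin 3) ℚ) = !![0, p, s; 0, 0, 0; 0, 0, 0] := by
      have h1 := congrArg (Subtype.val) hxy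
      push_cast at h1
      rw [← h1, hm]
      ext i j; fin_cases i <;> fin_cases j <;>
        simp [hA, Matrix.mul_apply, Fin.sum_univ_three, Matrix.vecHead, Matrix.vecTail]
    have hcomB := congrArg (Subtype.val) ((Semigroup.mem_center_iff.mp hyc) B)
    push_cast at hcomB
    rw [hyval] at hcomB
    have hp : p = 0 := by
      have := congrArg (fun m : Matrix (Fin 3) (Fin 3) ℚ => m 0 2) hcomB
      simpa [hB, Matrix.mul_apply, Fin.sum_univ_three] using this.symm
    apply hy0
    apply Subtype.ext
    rw [hyval, hp, hs]
    ext i j; fin_cases i <;> fin_cases j <;> rfl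
end

section
/- Let R = ℤ[x, y] be the polynomial ring in two variables over ℤ, and let T(R) be the set of all 3×3 matrices over R of the form [[f, ∂f/∂x, g], [0, f, ∂f/∂y], [0, 0, f]] with f, g ∈ R, where ∂/∂x and ∂/∂y are the partial derivative maps. Then T(R) is a unital subring of the ring Mat₃(R) of 3×3 matrices over R, every matrix of the form g·E₁₃ (g ∈ R, E₁₃ the matrix unit with 1 in position (1,3) and 0 elsewhere) lies in the center of T(R), and T(R) is a non-commutative centrally essential ring. -/
open MvPolynomial Matrix



noncomputable section

abbrev R2 : Type := MvPolynomial (Fin 2) ℤ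

def M19 (f g : R2) : Matrix (Fin 3) (Fin 3) R2 :=
  !![f, pderiv 0 f, g; 0, f, pderiv 1 f; 0, 0, f]

lemma M19_mul (f g f' g' : R2) :
    M19 f g * M19 f' g' =
      M19 (f * f') (f * g' + pderiv 0 f * pderiv 1 f' + g * f') := by
  ext i j : 2
  fin_cases i <;> fin_cases j <;>
    simp [M19, mul_apply, Fin.sum_univ_three, pderiv_mul, vecHead, vecTail] <;> ring

lemma M19_add (f g f' g' : R2) :
    M19 f g + M19 f' g' = M19 (f + f') (g + g') := by
  ext i j : 2
  fin_cases i <;> fin_cases j <;> simp [M19, vecHead, vecTail]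

lemma M19_neg (f g : R2) : -M19 f g = M19 (-f) (-g) := by
  ext i j : 2
  fin_cases i <;> fin_cases j <;> simp [M19, vecHead, vecTail]

lemma M19_one : (1 : Matrix (Fin 3) (Fin 3) R2) = M19 1 0 := by
  ext i j : 2
  fin_cases i <;> fin_cases j <;> simp [M19, Matrix.one_apply, vecHead, vecTail]

lemma M19_zero : (0 : Matrix (Fin 3) (Fin 3) R2) = M19 0 0 := by
  ext i j : 2
  fin_cases i <;> fin_cases j <;> simp [M19, vecHead, vecTail]

lemma std_eq (g : R2) : Matrix.single 0 2 g = M19 0 g := by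
  ext i j : 2
  fin_cases i <;> fin_cases j <;> simp [M19, Matrix.single, vecHead, vecTail]

end

noncomputable section

lemma M19_inj {f g f' g' : R2} (h : M19 f g = M19 f' g') : f = f' ∧ g = g' := by
  constructor
  · have := congrFun (congrFun h 0) 0; simpa [M19] using this
  · have := congrFun (congrFun h 0) 2; simpa [M19, vecHead, vecTail] using this

def T19 : Subring (Matrix (Fin 3) (Fin 3) R2) where
  carrier := {m | ∃ f g : R2, m = M19 f g}
  mul_mem' := by
    rintro _ _ ⟨f, g, rfl⟩ ⟨f', g', rfl⟩
    exact ⟨_, _, M19_mul f g f' g'⟩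
  one_mem' := ⟨1, 0, M19_one⟩
  add_mem' := by
    rintro _ _ ⟨f, g, rfl⟩ ⟨f', g', rfl⟩
    exact ⟨_, _, M19_add f g f' g'⟩
  zero_mem' := ⟨0, 0, M19_zero⟩
  neg_mem' := by
    rintro _ ⟨f, g, rfl⟩
    exact ⟨_, _, M19_neg f g⟩

lemma std_mem (g : R2) : Matrix.single 0 2 g ∈ T19 := ⟨0, g, std_eq g⟩

lemma M19_zero_comm (c : R2) {m : Matrix (Fin 3) (Fin 3) R2} (hm : m ∈ T19) :
    M19 0 c * m = m * M19 0 c := by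
  obtain ⟨f, g, rfl⟩ := hm
  rw [M19_mul, M19_mul]
  congr 1 <;> simp <;> ring

lemma central_sub (c : R2) : (⟨M19 0 c, 0, c, rfl⟩ : T19) ∈ Set.center T19 := by
  rw [Semigroup.mem_center_iff]
  intro b
  ext : 1
  exact (M19_zero_comm c b.2).symm

/-- for `R = ℤ[x, y]`, the set `T(R)` of matrices
`[[f, ∂f/∂x, g], [0, f, ∂f/∂y], [0, 0, f]]` is a unital subring of `Mat₃(R)`, all
matrices `g·E₁₃` are central in `T(R)`, and `T(R)` is a non-commutative centrally
essential ring. -/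
theorem exists_subring_TR_centrallyEssential :
    ∃ T : Subring (Matrix (Fin 3) (Fin 3) (MvPolynomial (Fin 2) ℤ)),
      (T : Set (Matrix (Fin 3) (Fin 3) (MvPolynomial (Fin 2) ℤ))) =
        {m | ∃ f g : MvPolynomial (Fin 2) ℤ,
          m = !![f, MvPolynomial.pderiv 0 f, g;
                 0, f, MvPolynomial.pderiv 1 f;
                 0, 0, f]} ∧
      (∀ g : MvPolynomial (Fin 2) ℤ,
        Matrix.single 0 2 g ∈ T ∧
        ∀ m ∈ T, Matrix.single 0 2 g * m = m * Matrix.single 0 2 g) ∧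
      (¬∀ a b : T, a * b = b * a) ∧
      IsCentrallyEssential T := by
  refine ⟨T19, rfl, fun g => ⟨std_mem g, fun m hm => ?_⟩, ?_, ?_⟩
  · rw [std_eq]; exact M19_zero_comm g hm
  · intro h
    have := h ⟨M19 (X 0) 0, _, _, rfl⟩ ⟨M19 (X 1) 0, _, _, rfl⟩
    rw [Subtype.ext_iff, MulMemClass.coe_mul, MulMemClass.coe_mul] at this
    simp only [M19_mul] at this
    have h2 := (M19_inj this).2
    rw [pderiv_X_self, pderiv_X_self, pderiv_X_of_ne (by decide), pderiv_X_of_ne (by decide)] at h2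
    simp at h2
  · intro a ha
    obtain ⟨f, g, hfg⟩ := a.2
    by_cases hf : f = 0
    · refine ⟨1, a, Set.one_mem_center, ?_, one_ne_zero, ha, mul_one a⟩
      subst hf
      have : a = ⟨M19 0 g, 0, g, rfl⟩ := Subtype.ext hfg
      rw [this]; exact central_sub g
    · refine ⟨⟨M19 0 1, 0, 1, rfl⟩, ⟨M19 0 f, 0, f, rfl⟩, central_sub 1, central_sub f,
        ?_, ?_, ?_⟩
      · intro h
        have h' := Subtype.ext_iff.mp h
        rw [ZeroMemClass.coe_zero, M19_zero] at h'
        exact one_ne_zero (M19_inj h').2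
      · intro h
        have h' := Subtype.ext_iff.mp h
        rw [ZeroMemClass.coe_zero, M19_zero] at h'
        exact hf (M19_inj h').2
      · ext : 1
        show a.val * M19 0 1 = M19 0 f
        rw [hfg, M19_mul]
        congr 1 <;> simp

end
end
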